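/- Let q be a prime power, r a power of the same prime with F_r ⊆ F_q, and d ≥ 1 an odd integer such that every prime factor of d divides r−1 and gcd(d, (q−1)/(r−1)) = 1. If γ is a primitive element (generator of the multiplicative group) of F_r, then the binomial T^d − γ ∈ F_r[T] is irreducible over F_q. -/

import Mathlib

open Polynomial

/-- Binomial irreducibility criterion: if every prime factor of the odd integer `d`
divides `r - 1` and `gcd(d, (q-1)/(r-1)) = 1`, then `T^d - γ` is irreducible over `F_q`
for `γ` a primitive element of `F_r ⊆ F_q`. -/
theorem stmt0 (Fr Fq : Type) [Field Fr] [Fintype Fr] [Field Fq] [Fintype Fq]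
    [Algebra Fr Fq] (d : ℕ) (hd1 : 1 ≤ d) (hodd : Odd d)
    (hfac : ∀ p : ℕ, p.Prime → p ∣ d → p ∣ (Fintype.card Fr - 1))
    (hgcd : Nat.gcd d ((Fintype.card Fq - 1) / (Fintype.card Fr - 1)) = 1)
    (γ : Frˣ) (hγ : ∀ x : Frˣ, x ∈ Subgroup.zpowers γ) :
    Irreducible ((X : Polynomial Fq) ^ d - C (algebraMap Fr Fq γ)) := by
  apply X_pow_sub_C_irreducible_of_odd hodd
  intro p hp hpd b hb
  have hinj : Function.Injective (algebraMap Fr Fq) := RingHom.injective _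
  set γ' : Fqˣ := Units.map (algebraMap Fr Fq).toMonoidHom γ with hγ'def
  have hordγ : orderOf γ = Fintype.card Fr - 1 := by
    rw [orderOf_eq_card_of_forall_mem_zpowers hγ, Nat.card_units, Nat.card_eq_fintype_card]
  have hordγ' : orderOf γ' = Fintype.card Fr - 1 := by
    rw [← hordγ]
    exact orderOf_injective _ (Units.map_injective hinj) γ
  -- b ≠ 0
  have hb0 : b ≠ 0 := by
    rintro rfl
    rw [zero_pow hp.ne_zero] at hb
    exact γ.ne_zero (hinj (by simpa using hb.symm))
  set u : Fqˣ := Units.mk0 b hb0 with hudef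
  have hup : u ^ p = γ' := by
    ext
    simpa [hudef, hγ'def] using hb
  have hpr : p ∣ Fintype.card Fr - 1 := hfac p hp hpd
  have hpord : p ∣ orderOf u := by
    by_contra hnp
    have h1 : orderOf (u ^ p) = orderOf u :=
      (Nat.Coprime.orderOf_pow ((Nat.Prime.coprime_iff_not_dvd hp).mpr hnp).symm)
    rw [hup, hordγ'] at h1
    exact hnp (h1 ▸ hpr)
  have hord_pow : orderOf (u ^ p) = orderOf u / p := by
    rw [orderOf_pow_of_dvd hp.ne_zero hpord]
  have hordu : orderOf u = p * (Fintype.card Fr - 1) := by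
    rw [hup, hordγ'] at hord_pow
    obtain ⟨k, hk⟩ := hpord
    rw [hk, Nat.mul_div_cancel_left _ hp.pos] at hord_pow
    rw [hk, hord_pow]
  have hudvd : orderOf u ∣ Fintype.card Fq - 1 := by
    rw [← Nat.card_eq_fintype_card, ← Nat.card_units]
    exact orderOf_dvd_natCard u
  have hγdvd : (Fintype.card Fr - 1) ∣ Fintype.card Fq - 1 := by
    rw [← hordγ', ← Nat.card_eq_fintype_card, ← Nat.card_units]
    exact orderOf_dvd_natCard γ'
  obtain ⟨m, hm⟩ := hγdvd
  have hr1 : 0 < Fintype.card Fr - 1 := by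
    have : 1 < Fintype.card Fr := Fintype.one_lt_card
    omega
  have hpm : p ∣ m := by
    have := hudvd
    rw [hordu, hm] at this
    rw [mul_comm] at this
    exact (Nat.mul_dvd_mul_iff_left hr1).mp this
  have hmeq : m = (Fintype.card Fq - 1) / (Fintype.card Fr - 1) := by
    rw [hm, Nat.mul_div_cancel_left _ hr1]
  have : p ∣ Nat.gcd d ((Fintype.card Fq - 1) / (Fintype.card Fr - 1)) :=
    Nat.dvd_gcd hpd (hmeq ▸ hpm)
  rw [hgcd] at this
  exact hp.one_lt.ne' (Nat.dvd_one.mp this)
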